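/- Let X₁,…,Xₙ be independent real-valued random variables whose distribution functions are all long-tailed. Then P(max_{1≤k≤n} (X₁+⋯+X_k) > x) ∼ P(X₁+⋯+Xₙ > x) as x → ∞. -/

import Mathlib

open Filter MeasureTheory ProbabilityTheory
open scoped ENNReal

def LongTailedRV {Ω : Type*} [MeasurableSpace Ω] (μ : Measure Ω) (Z : Ω → ℝ) : Prop :=
  (∀ x : ℝ, 0 < μ {ω | Z ω > x}) ∧
    ∀ a : ℝ, Tendsto (fun x : ℝ => (μ {ω | Z ω > x + a}).toReal / (μ {ω | Z ω > x}).toReal)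
      atTop (nhds 1)

lemma tendsto_ratio_all (f : ℝ → ℝ) (hpos : ∀ x, 0 < f x)
    (h : ∀ a : ℝ, 0 < a → Tendsto (fun x => f (x + a) / f x) atTop (nhds 1)) :
    ∀ a : ℝ, Tendsto (fun x => f (x + a) / f x) atTop (nhds 1) := by
  intro a
  rcases lt_trichotomy a 0 with h1 | h1 | h1
  · have h2 := h (-a) (by linarith)
    have h3 : Tendsto (fun x : ℝ => f (x + a + -a) / f (x + a)) atTop (nhds 1) :=
      h2.comp (tendsto_atTop_add_const_right atTop a tendsto_id)
    have h4 : Tendsto (fun x : ℝ => (f (x + a + -a) / f (x + a))⁻¹) atTop (nhds 1) := by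
      simpa using h3.inv₀ one_ne_zero
    have h5 : (fun x : ℝ => (f (x + a + -a) / f (x + a))⁻¹)
        = fun x : ℝ => f (x + a) / f x := by
      funext x
      rw [add_neg_cancel_right, inv_div]
    rwa [h5] at h4
  · subst h1
    have : (fun x : ℝ => f (x + 0) / f x) = fun _ => (1:ℝ) := by
      funext x; rw [add_zero, div_self (hpos x).ne']
    rw [this]; exact tendsto_const_nhds
  · exact h a h1

lemma ennreal_coeff_le {c : ℝ} {p q : ℝ≥0∞} (hp : p ≠ ⊤) (hq : q ≠ ⊤)
    (h : c * p.toReal ≤ q.toReal) : ENNReal.ofReal c * p ≤ q := by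
  rcases le_or_gt c 0 with hc | hc
  · simp [ENNReal.ofReal_eq_zero.2 hc]
  · rw [← ENNReal.ofReal_toReal hp, ← ENNReal.ofReal_toReal hq, ← ENNReal.ofReal_mul hc.le]
    exact ENNReal.ofReal_le_ofReal h

lemma longTailedRV_add {Ω : Type*} [MeasurableSpace Ω] {μ : Measure Ω} [IsProbabilityMeasure μ]
    {X Y : Ω → ℝ} (hX : Measurable X) (hY : Measurable Y) (hXY : IndepFun X Y μ)
    (hXl : LongTailedRV μ X) (hYl : LongTailedRV μ Y) :
    LongTailedRV μ (fun ω => X ω + Y ω) := by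
  have hpre : ∀ (Z : Ω → ℝ) (c : ℝ), Z ⁻¹' Set.Ioi c = {ω | Z ω > c} := fun _ _ => rfl
  have hposS : ∀ t : ℝ, 0 < μ {ω | X ω + Y ω > t} := by
    intro t
    have hsub : X ⁻¹' Set.Ioi (max t 0) ∩ Y ⁻¹' Set.Ioi 0 ⊆ {ω | X ω + Y ω > t} := by
      rintro ω ⟨h1, h2⟩
      simp only [Set.mem_preimage, Set.mem_Ioi] at h1 h2
      have h3 := le_max_left t 0
      simp only [Set.mem_setOf_eq]
      exact lt_of_le_of_lt h3 (by linarith)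
    have hmul := hXY.measure_inter_preimage_eq_mul (μ := μ) (Set.Ioi (max t 0)) (Set.Ioi (0:ℝ))
      measurableSet_Ioi measurableSet_Ioi
    calc (0:ℝ≥0∞) < μ (X ⁻¹' Set.Ioi (max t 0)) * μ (Y ⁻¹' Set.Ioi 0) := by
          rw [hpre, hpre]
          exact ENNReal.mul_pos (hXl.1 (max t 0)).ne' (hYl.1 0).ne'
      _ = μ (X ⁻¹' Set.Ioi (max t 0) ∩ Y ⁻¹' Set.Ioi 0) := hmul.symm
      _ ≤ _ := measure_mono hsub
  refine ⟨hposS, tendsto_ratio_all _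
    (fun x => ENNReal.toReal_pos (hposS x).ne' (measure_ne_top μ _)) ?_⟩
  intro a ha
  set ν₁ := μ.map X with hν₁
  set ν₂ := μ.map Y with hν₂
  haveI hprob₁ : IsProbabilityMeasure ν₁ := Measure.isProbabilityMeasure_map hX.aemeasurable
  haveI hprob₂ : IsProbabilityMeasure ν₂ := Measure.isProbabilityMeasure_map hY.aemeasurable
  have hmap : μ.map (fun ω => (X ω, Y ω)) = ν₁.prod ν₂ :=
    (indepFun_iff_map_prod_eq_prod_map_map hX.aemeasurable hY.aemeasurable).mp hXY
  have hmsum : ∀ b : ℝ, MeasurableSet {p : ℝ × ℝ | p.1 + p.2 > b} := fun b =>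
    measurableSet_lt measurable_const (measurable_fst.add measurable_snd)
  have hT : ∀ b : ℝ, μ {ω | X ω + Y ω > b} = (ν₁.prod ν₂) {p : ℝ × ℝ | p.1 + p.2 > b} := by
    intro b
    rw [← hmap, Measure.map_apply (hX.prodMk hY) (hmsum b)]
    rfl
  have hF : ∀ t : ℝ, ν₁ (Set.Ioi t) = μ {ω | X ω > t} := by
    intro t; rw [hν₁, Measure.map_apply hX measurableSet_Ioi, hpre]
  have hG : ∀ t : ℝ, ν₂ (Set.Ioi t) = μ {ω | Y ω > t} := by
    intro t; rw [hν₂, Measure.map_apply hY measurableSet_Ioi, hpre]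
  rw [Metric.tendsto_nhds]
  intro ε hε
  set ε2 : ℝ := min (ε / 2) (1 / 2) with hε2def
  have hε2pos : 0 < ε2 := lt_min (by linarith) (by norm_num)
  have hε2lt : ε2 < ε := lt_of_le_of_lt (min_le_left _ _) (by linarith)
  have hε2le : ε2 ≤ 1 / 2 := min_le_right _ _
  have hcoef : ∀ (Z : Ω → ℝ), Measurable Z → LongTailedRV μ Z →
      ∀ᶠ t in atTop, ENNReal.ofReal (1 - ε2) * μ {ω | Z ω > t} ≤ μ {ω | Z ω > t + a} := by
    intro Z _ hZl
    filter_upwards [(hZl.2 a).eventually (eventually_gt_nhds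
      (show 1 - ε2 < 1 by linarith))] with t ht
    have hpt : 0 < (μ {ω | Z ω > t}).toReal :=
      ENNReal.toReal_pos (hZl.1 t).ne' (measure_ne_top μ _)
    refine ennreal_coeff_le (measure_ne_top μ _) (measure_ne_top μ _) ?_
    calc (1 - ε2) * (μ {ω | Z ω > t}).toReal
        ≤ ((μ {ω | Z ω > t + a}).toReal / (μ {ω | Z ω > t}).toReal)
            * (μ {ω | Z ω > t}).toReal := mul_le_mul_of_nonneg_right ht.le hpt.le
      _ = (μ {ω | Z ω > t + a}).toReal := div_mul_cancel₀ _ hpt.ne'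
  obtain ⟨x₁, hx₁⟩ := eventually_atTop.mp (hcoef X hX hXl)
  obtain ⟨x₂, hx₂⟩ := eventually_atTop.mp (hcoef Y hY hYl)
  have hx₁' : ∀ t : ℝ, x₁ ≤ t → ENNReal.ofReal (1 - ε2) * ν₁ (Set.Ioi t) ≤ ν₁ (Set.Ioi (t + a)) := by
    intro t ht; rw [hF, hF]; exact hx₁ t ht
  have hx₂' : ∀ t : ℝ, x₂ ≤ t → ENNReal.ofReal (1 - ε2) * ν₂ (Set.Ioi t) ≤ ν₂ (Set.Ioi (t + a)) := by
    intro t ht; rw [hG, hG]; exact hx₂ t ht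
  have main : ∀ x : ℝ, x₁ ≤ x / 2 → x₂ ≤ x / 2 →
      ENNReal.ofReal (1 - ε2) * (ν₁.prod ν₂) {p : ℝ × ℝ | p.1 + p.2 > x}
        ≤ (ν₁.prod ν₂) {p : ℝ × ℝ | p.1 + p.2 > x + a} := by
    intro x h1 h2
    set c := x / 2 with hc
    have hmA : ∀ b : ℝ, MeasurableSet {p : ℝ × ℝ | p.1 + p.2 > b ∧ p.2 ≤ c} := fun b => by
      have : {p : ℝ × ℝ | p.1 + p.2 > b ∧ p.2 ≤ c}
          = {p : ℝ × ℝ | p.1 + p.2 > b} ∩ {p : ℝ × ℝ | p.2 ≤ c} := rfl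
      rw [this]
      exact (hmsum b).inter (measurableSet_le measurable_snd measurable_const)
    have hmB : ∀ b : ℝ, MeasurableSet {p : ℝ × ℝ | p.1 + p.2 > b ∧ c < p.2} := fun b => by
      have : {p : ℝ × ℝ | p.1 + p.2 > b ∧ c < p.2}
          = {p : ℝ × ℝ | p.1 + p.2 > b} ∩ {p : ℝ × ℝ | c < p.2} := rfl
      rw [this]
      exact (hmsum b).inter (measurableSet_lt measurable_const measurable_snd)
    have hsplit : ∀ b : ℝ, (ν₁.prod ν₂) {p : ℝ × ℝ | p.1 + p.2 > b}
        = (ν₁.prod ν₂) {p : ℝ × ℝ | p.1 + p.2 > b ∧ p.2 ≤ c}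
          + (ν₁.prod ν₂) {p : ℝ × ℝ | p.1 + p.2 > b ∧ c < p.2} := by
      intro b
      rw [← measure_union ?_ (hmB b)]
      · congr 1
        ext p
        simp only [Set.mem_setOf_eq, Set.mem_union]
        constructor
        · intro h
          rcases le_or_gt p.2 c with h' | h'
          · exact Or.inl ⟨h, h'⟩
          · exact Or.inr ⟨h, h'⟩
        · rintro (⟨h, _⟩ | ⟨h, _⟩) <;> exact h
      · rw [Set.disjoint_left]
        rintro p ⟨_, hp⟩ ⟨_, hp'⟩
        exact absurd hp' (not_lt.mpr hp)
    have claim1 : ENNReal.ofReal (1 - ε2) * (ν₁.prod ν₂) {p : ℝ × ℝ | p.1 + p.2 > x ∧ p.2 ≤ c}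
        ≤ (ν₁.prod ν₂) {p : ℝ × ℝ | p.1 + p.2 > x + a ∧ p.2 ≤ c} := by
      rw [Measure.prod_apply_symm (hmA x), Measure.prod_apply_symm (hmA (x + a)),
        ← MeasureTheory.lintegral_const_mul' _ _ ENNReal.ofReal_ne_top]
      refine lintegral_mono fun v => ?_
      by_cases hv : v ≤ c
      · have e1 : (fun u : ℝ => (u, v)) ⁻¹' {p : ℝ × ℝ | p.1 + p.2 > x ∧ p.2 ≤ c}
            = Set.Ioi (x - v) := by
          ext u
          simp only [Set.mem_preimage, Set.mem_setOf_eq, Set.mem_Ioi, hv, and_true]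
          constructor <;> intro h <;> linarith
        have e2 : (fun u : ℝ => (u, v)) ⁻¹' {p : ℝ × ℝ | p.1 + p.2 > x + a ∧ p.2 ≤ c}
            = Set.Ioi (x - v + a) := by
          ext u
          simp only [Set.mem_preimage, Set.mem_setOf_eq, Set.mem_Ioi, hv, and_true]
          constructor <;> intro h <;> linarith
        rw [e1, e2]
        exact hx₁' (x - v) (by simp only [hc] at *; linarith)
      · have e1 : (fun u : ℝ => (u, v)) ⁻¹' {p : ℝ × ℝ | p.1 + p.2 > x ∧ p.2 ≤ c}
            = (∅ : Set ℝ) := by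
          ext u; simp only [Set.mem_preimage, Set.mem_setOf_eq, Set.mem_empty_iff_false,
            iff_false, not_and]
          intro _; exact hv
        rw [e1]
        simp
    have claim2 : ENNReal.ofReal (1 - ε2) * (ν₁.prod ν₂) {p : ℝ × ℝ | p.1 + p.2 > x ∧ c < p.2}
        ≤ (ν₁.prod ν₂) {p : ℝ × ℝ | p.1 + p.2 > x + a ∧ c < p.2} := by
      rw [Measure.prod_apply (hmB x), Measure.prod_apply (hmB (x + a)),
        ← MeasureTheory.lintegral_const_mul' _ _ ENNReal.ofReal_ne_top]
      refine lintegral_mono fun u => ?_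
      have e1 : Prod.mk u ⁻¹' {p : ℝ × ℝ | p.1 + p.2 > x ∧ c < p.2}
          = Set.Ioi (max c (x - u)) := by
        ext v
        simp only [Set.mem_preimage, Set.mem_setOf_eq, Set.mem_Ioi, max_lt_iff]
        constructor
        · rintro ⟨h1', h2'⟩; exact ⟨h2', by linarith⟩
        · rintro ⟨h1', h2'⟩; exact ⟨by linarith, h1'⟩
      have e2 : Prod.mk u ⁻¹' {p : ℝ × ℝ | p.1 + p.2 > x + a ∧ c < p.2}
          = Set.Ioi (max c (x + a - u)) := by
        ext v
        simp only [Set.mem_preimage, Set.mem_setOf_eq, Set.mem_Ioi, max_lt_iff]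
        constructor
        · rintro ⟨h1', h2'⟩; exact ⟨h2', by linarith⟩
        · rintro ⟨h1', h2'⟩; exact ⟨by linarith, h1'⟩
      rw [e1, e2]
      calc ENNReal.ofReal (1 - ε2) * ν₂ (Set.Ioi (max c (x - u)))
          ≤ ν₂ (Set.Ioi (max c (x - u) + a)) := hx₂' _ (le_trans h2 (le_max_left _ _))
        _ ≤ ν₂ (Set.Ioi (max c (x + a - u))) := by
            refine measure_mono (Set.Ioi_subset_Ioi ?_)
            refine max_le (le_trans (le_max_left _ _) (by linarith [le_max_left c (x - u)])) ?_
            have : x + a - u = (x - u) + a := by ring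
            rw [this]
            exact add_le_add_left (le_max_right _ _) a
      
    calc ENNReal.ofReal (1 - ε2) * (ν₁.prod ν₂) {p : ℝ × ℝ | p.1 + p.2 > x}
        = ENNReal.ofReal (1 - ε2) * (ν₁.prod ν₂) {p : ℝ × ℝ | p.1 + p.2 > x ∧ p.2 ≤ c}
          + ENNReal.ofReal (1 - ε2) * (ν₁.prod ν₂) {p : ℝ × ℝ | p.1 + p.2 > x ∧ c < p.2} := by
          rw [hsplit x, mul_add]
      _ ≤ (ν₁.prod ν₂) {p : ℝ × ℝ | p.1 + p.2 > x + a ∧ p.2 ≤ c}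
          + (ν₁.prod ν₂) {p : ℝ × ℝ | p.1 + p.2 > x + a ∧ c < p.2} := add_le_add claim1 claim2
      _ = (ν₁.prod ν₂) {p : ℝ × ℝ | p.1 + p.2 > x + a} := (hsplit (x + a)).symm
  filter_upwards [eventually_ge_atTop (2 * max x₁ x₂)] with x hx
  have hc1 : x₁ ≤ x / 2 := by
    have := le_max_left x₁ x₂; linarith
  have hc2 : x₂ ≤ x / 2 := by
    have := le_max_right x₁ x₂; linarith
  have hkey : ENNReal.ofReal (1 - ε2) * μ {ω | X ω + Y ω > x} ≤ μ {ω | X ω + Y ω > x + a} := by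
    rw [hT x, hT (x + a)]
    exact main x hc1 hc2
  have hDpos : 0 < (μ {ω | X ω + Y ω > x}).toReal :=
    ENNReal.toReal_pos (hposS x).ne' (measure_ne_top μ _)
  have hNle : (μ {ω | X ω + Y ω > x + a}).toReal ≤ (μ {ω | X ω + Y ω > x}).toReal := by
    refine ENNReal.toReal_mono (measure_ne_top μ _) (measure_mono ?_)
    intro ω hω
    simp only [Set.mem_setOf_eq] at *
    linarith
  have hlow : (1 - ε2) * (μ {ω | X ω + Y ω > x}).toReal
      ≤ (μ {ω | X ω + Y ω > x + a}).toReal := by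
    have h' := ENNReal.toReal_mono (measure_ne_top μ _) hkey
    rwa [ENNReal.toReal_mul, ENNReal.toReal_ofReal (by linarith)] at h'
  have hr1 : 1 - ε2 ≤ (μ {ω | X ω + Y ω > x + a}).toReal / (μ {ω | X ω + Y ω > x}).toReal :=
    (le_div_iff₀ hDpos).mpr hlow
  have hr2 : (μ {ω | X ω + Y ω > x + a}).toReal / (μ {ω | X ω + Y ω > x}).toReal ≤ 1 :=
    (div_le_one hDpos).mpr hNle
  rw [Real.dist_eq, abs_lt]
  constructor <;> linarith

lemma longTailedRV_sum {Ω : Type*} [MeasurableSpace Ω] {μ : Measure Ω} [IsProbabilityMeasure μ]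
    {n : ℕ} {X : Fin n → Ω → ℝ} (hmeas : ∀ i, Measurable (X i))
    (hindep : iIndepFun X μ)
    (hl : ∀ i, LongTailedRV μ (X i)) (s : Finset (Fin n)) (hs : s.Nonempty) :
    LongTailedRV μ (fun ω => ∑ i ∈ s, X i ω) := by
  classical
  induction s using Finset.cons_induction with
  | empty => exact absurd hs (by simp)
  | cons i s hi ih =>
    rcases s.eq_empty_or_nonempty with rfl | hne
    · simpa using hl i
    · have hsum : Measurable (fun ω => ∑ j ∈ s, X j ω) :=
        Finset.measurable_sum _ (fun j _ => hmeas j)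
      have hind : IndepFun (X i) (∑ j ∈ s, X j) μ :=
        (hindep.indepFun_finsetSum_of_notMem hmeas hi).symm
      have hind' : IndepFun (X i) (fun ω => ∑ j ∈ s, X j ω) μ := by
        have h0 : (∑ j ∈ s, X j) = fun ω => ∑ j ∈ s, X j ω := by
          funext ω; simp
        rwa [h0] at hind
      have h1 := longTailedRV_add (hmeas i) hsum hind' (hl i) (ih hne)
      have e : (fun ω => ∑ j ∈ Finset.cons i s hi, X j ω)
          = fun ω => X i ω + ∑ j ∈ s, X j ω := by
        funext ω; exact Finset.sum_cons hi
      rw [e]; exact h1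

theorem max_partial_sums_tail_asymp
    {Ω : Type*} [MeasurableSpace Ω] (μ : Measure Ω) [IsProbabilityMeasure μ]
    (n : ℕ) (hn : 1 ≤ n) (X : Fin n → Ω → ℝ) (hmeas : ∀ i, Measurable (X i))
    (hindep : iIndepFun X μ)
    (hpos : ∀ i, ∀ x : ℝ, 0 < (μ {ω | X i ω > x}).toReal)
    (hlong : ∀ i, ∀ a : ℝ,
      Tendsto (fun x : ℝ => (μ {ω | X i ω > x + a}).toReal / (μ {ω | X i ω > x}).toReal)
        atTop (nhds 1)) :
    Tendsto (fun x : ℝ =>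
        (μ {ω | (Finset.Icc 1 n).sup' (Finset.nonempty_Icc.mpr hn)
            (fun k => ∑ i ∈ Finset.univ.filter (fun i : Fin n => (i : ℕ) < k), X i ω) > x}).toReal
          / (μ {ω | (∑ i, X i ω) > x}).toReal) atTop (nhds 1) := by
  classical
  -- partial sums and tail sums
  let S : ℕ → Ω → ℝ := fun k ω => ∑ i ∈ Finset.univ.filter (fun i : Fin n => (i : ℕ) < k), X i ω
  let T : ℕ → Ω → ℝ := fun k ω => ∑ i ∈ Finset.univ.filter (fun i : Fin n => k ≤ (i : ℕ)), X i ω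
  let M : Ω → ℝ := fun ω => (Finset.Icc 1 n).sup' (Finset.nonempty_Icc.mpr hn) (fun k => S k ω)
  have hSmeas : ∀ k, Measurable (S k) := fun k => Finset.measurable_sum _ (fun i _ => hmeas i)
  have hTmeas : ∀ k, Measurable (T k) := fun k => Finset.measurable_sum _ (fun i _ => hmeas i)
  have hfil : ∀ ω, S n ω = ∑ i, X i ω := by
    intro ω
    refine Finset.sum_congr ?_ (fun _ _ => rfl)
    refine Finset.filter_true_of_mem fun i _ => i.isLt
  have hST : ∀ (k : ℕ) (ω : Ω), S k ω + T k ω = S n ω := by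
    intro k ω
    rw [hfil]
    have h1 : Finset.univ.filter (fun i : Fin n => k ≤ (i : ℕ))
        = Finset.univ.filter (fun i : Fin n => ¬ (i : ℕ) < k) := by
      apply Finset.filter_congr; intro i _; simp [not_lt]
    show (∑ i ∈ Finset.univ.filter (fun i : Fin n => (i : ℕ) < k), X i ω)
        + (∑ i ∈ Finset.univ.filter (fun i : Fin n => k ≤ (i : ℕ)), X i ω) = ∑ i, X i ω
    rw [h1]
    exact Finset.sum_filter_add_sum_filter_not _ _ _
  have hl : ∀ i, LongTailedRV μ (X i) := by
    intro i
    constructor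
    · intro x
      have h := hpos i x
      rcases ENNReal.toReal_pos_iff.mp h with ⟨h1, _⟩
      exact h1
    · exact hlong i
  -- long-tailedness of S n
  have hlongS : LongTailedRV μ (S n) := by
    have := longTailedRV_sum hmeas hindep hl
      (Finset.univ.filter (fun i : Fin n => (i : ℕ) < n))
      ⟨⟨0, hn⟩, by simp [hn]⟩
    exact this
  -- events
  let A : ℕ → ℝ → Set Ω := fun k x => {ω | S k ω > x ∧ ∀ j, 1 ≤ j → j < k → S j ω ≤ x}
  let B : ℕ → ℝ → Set Ω := fun k a => {ω | T k ω > -a}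
  have hAmeas : ∀ k x, MeasurableSet (A k x) := by
    intro k x
    have : A k x = {ω | S k ω > x} ∩ ⋂ j ∈ Finset.Ico 1 k, {ω | S j ω ≤ x} := by
      ext ω
      simp only [A, Set.mem_setOf_eq, Set.mem_inter_iff, Set.mem_iInter, Finset.mem_Ico]
      tauto
    rw [this]
    refine (measurableSet_lt measurable_const (hSmeas k)).inter ?_
    refine Set.Finite.measurableSet_biInter (Finset.finite_toSet _) fun j _ =>
      measurableSet_le (hSmeas j) measurable_const
  have hBmeas : ∀ k a, MeasurableSet (B k a) := fun k a =>
    measurableSet_lt measurable_const (hTmeas k)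
  -- covering
  have hcover : ∀ x : ℝ, {ω | M ω > x} = ⋃ k ∈ Finset.Icc 1 n, A k x := by
    intro x
    ext ω
    simp only [Set.mem_setOf_eq, Set.mem_iUnion, exists_prop]
    constructor
    · intro h
      rw [show (M ω > x) = (x < (Finset.Icc 1 n).sup' (Finset.nonempty_Icc.mpr hn)
        (fun k => S k ω)) from rfl, Finset.lt_sup'_iff] at h
      have hP : ∃ k, (1 ≤ k ∧ k ≤ n) ∧ x < S k ω := by
        obtain ⟨k, hk, h'⟩ := h
        exact ⟨k, Finset.mem_Icc.mp hk, h'⟩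
      refine ⟨Nat.find hP, Finset.mem_Icc.mpr (Nat.find_spec hP).1, (Nat.find_spec hP).2, ?_⟩
      intro j hj1 hjlt
      by_contra hcon
      push_neg at hcon
      exact Nat.find_min hP hjlt ⟨⟨hj1, le_trans (le_of_lt hjlt) (Nat.find_spec hP).1.2⟩, hcon⟩
    · rintro ⟨k, hk, h1, _⟩
      exact lt_of_lt_of_le h1 (Finset.le_sup' (fun k => S k ω) hk)
  -- disjointness
  have hAdisj : ∀ x : ℝ, (↑(Finset.Icc 1 n) : Set ℕ).PairwiseDisjoint (fun k => A k x) := by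
    intro x k hk l hl hkl
    rw [Function.onFun, Set.disjoint_left]
    intro ω hωk hωl
    simp only [A, Set.mem_setOf_eq] at hωk hωl
    simp only [Finset.coe_Icc, Set.mem_Icc] at hk hl
    rcases lt_or_gt_of_ne hkl with h | h
    · exact absurd hωk.1 (not_lt.mpr (hωl.2 k hk.1 h))
    · exact absurd hωl.1 (not_lt.mpr (hωk.2 l hl.1 h))
  have hABdisj : ∀ (x a : ℝ), (↑(Finset.Icc 1 n) : Set ℕ).PairwiseDisjoint
      (fun k => A k x ∩ B k a) := by
    intro x a k hk l hl hkl
    exact Disjoint.mono Set.inter_subset_left Set.inter_subset_left (hAdisj x hk hl hkl)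
  -- independence
  have hAB : ∀ (k : ℕ) (x b : ℝ), μ (A k x ∩ B k b) = μ (A k x) * μ (B k b) := by
    intro k x b
    set s : Finset (Fin n) := Finset.univ.filter (fun i : Fin n => (i : ℕ) < k) with hsdef
    set t : Finset (Fin n) := Finset.univ.filter (fun i : Fin n => k ≤ (i : ℕ)) with htdef
    have hdisjst : Disjoint s t := by
      rw [Finset.disjoint_left]
      intro i hi hit
      rw [hsdef, Finset.mem_filter] at hi
      rw [htdef, Finset.mem_filter] at hit
      omega
    have hIndep2 := hindep.indepFun_finset s t hdisjst hmeas
    let U : Set (s → ℝ) := {g | (∑ i, g i) > x ∧ ∀ j ∈ Finset.Ico 1 k,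
        (∑ i : s, if ((i : Fin n) : ℕ) < j then g i else 0) ≤ x}
    let V : Set (t → ℝ) := {g | (∑ i, g i) > -b}
    have hUm : MeasurableSet U := by
      have e : U = {g : s → ℝ | (∑ i, g i) > x} ∩
          ⋂ j ∈ Finset.Ico 1 k, {g : s → ℝ |
            (∑ i : s, if ((i : Fin n) : ℕ) < j then g i else 0) ≤ x} := by
        ext g
        simp only [U, Set.mem_setOf_eq, Set.mem_inter_iff, Set.mem_iInter]
      rw [e]
      refine (measurableSet_lt measurable_const
        (Finset.measurable_sum _ fun i _ => measurable_pi_apply i)).inter ?_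
      refine Set.Finite.measurableSet_biInter (Finset.finite_toSet _) fun j _ => ?_
      refine measurableSet_le (Finset.measurable_sum _ fun i _ => ?_) measurable_const
      by_cases hij : ((i : Fin n) : ℕ) < j
      · simpa [hij] using measurable_pi_apply i
      · simpa [hij] using measurable_const
    have hVm : MeasurableSet V :=
      measurableSet_lt measurable_const
        (Finset.measurable_sum _ fun i _ => measurable_pi_apply i)
    have hAeq : (fun a (i : s) => X (↑i) a) ⁻¹' U = A k x := by
      ext ω
      have e1 : (∑ i : s, X (↑i) ω) = S k ω := Finset.sum_coe_sort s (fun i => X i ω)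
      have e2 : ∀ j : ℕ, j ≤ k →
          (∑ i : s, if ((i : Fin n) : ℕ) < j then X (↑i) ω else 0) = S j ω := by
        intro j hj
        rw [Finset.sum_coe_sort s (fun i => if ((i : Fin n) : ℕ) < j then X i ω else 0),
          ← Finset.sum_filter]
        show _ = ∑ i ∈ Finset.univ.filter (fun i : Fin n => (i : ℕ) < j), X i ω
        congr 1
        rw [hsdef, Finset.filter_filter]
        apply Finset.filter_congr
        intro i _
        constructor
        · rintro ⟨_, h⟩; exact h
        · intro h; exact ⟨lt_of_lt_of_le h hj, h⟩
      simp only [Set.mem_preimage, U, Set.mem_setOf_eq, A, Finset.mem_Ico]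
      constructor
      · rintro ⟨h1, h2⟩
        refine ⟨by rwa [e1] at h1, ?_⟩
        intro j hj1 hj2
        have h3 := h2 j ⟨hj1, hj2⟩
        rwa [e2 j hj2.le] at h3
      · rintro ⟨h1, h2⟩
        refine ⟨by rwa [e1], ?_⟩
        intro j hj
        rw [e2 j hj.2.le]
        exact h2 j hj.1 hj.2
    have hBeq : (fun a (i : t) => X (↑i) a) ⁻¹' V = B k b := by
      ext ω
      have e1 : (∑ i : t, X (↑i) ω) = T k ω := Finset.sum_coe_sort t (fun i => X i ω)
      simp only [Set.mem_preimage, V, Set.mem_setOf_eq, B]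
      rw [e1]
    rw [← hAeq, ← hBeq]
    exact hIndep2.measure_inter_preimage_eq_mul U V hUm hVm
  -- choice of a
  have hchoice : ∀ ε : ℝ, 0 < ε → ∃ a : ℝ, 0 < a ∧
      ∀ k ∈ Finset.Icc 1 n, ENNReal.ofReal (1 - ε) ≤ μ (B k a) := by
    intro ε hε
    let C : ℕ → Set Ω := fun m => ⋂ k ∈ Finset.Icc 1 n, B k (m : ℝ)
    have hmono : Monotone C := by
      intro m m' hmm
      refine Set.iInter₂_mono fun k _ => ?_
      intro ω hω
      simp only [B, Set.mem_setOf_eq] at hω ⊢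
      have h1 : (m : ℝ) ≤ (m' : ℝ) := Nat.cast_le.mpr hmm
      linarith
    have hunion : ⋃ m, C m = Set.univ := by
      ext ω
      simp only [Set.mem_iUnion, Set.mem_univ, iff_true]
      obtain ⟨m, hm⟩ := exists_nat_gt
        ((Finset.Icc 1 n).sup' (Finset.nonempty_Icc.mpr hn) (fun k => -T k ω))
      refine ⟨m, ?_⟩
      simp only [C, Set.mem_iInter, B, Set.mem_setOf_eq]
      intro k hk
      have h2 := Finset.le_sup' (fun k => -T k ω) hk
      linarith
    have htend := tendsto_measure_iUnion_atTop (μ := μ) hmono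
    rw [hunion, measure_univ] at htend
    have hlt : ENNReal.ofReal (1 - ε) < 1 := ENNReal.ofReal_lt_one.mpr (by linarith)
    obtain ⟨m, hm⟩ := (htend.eventually (eventually_gt_nhds hlt)).exists
    refine ⟨(m : ℝ) + 1, by positivity, ?_⟩
    intro k hk
    refine le_trans hm.le (measure_mono ?_)
    intro ω hω
    simp only [C, Set.mem_iInter, B, Set.mem_setOf_eq] at hω
    have h3 := hω k hk
    simp only [B, Set.mem_setOf_eq]
    linarith
  -- key inequality
  have hkeyineq : ∀ (a ε : ℝ), (∀ k ∈ Finset.Icc 1 n, ENNReal.ofReal (1 - ε) ≤ μ (B k a)) →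
      ∀ x : ℝ, ENNReal.ofReal (1 - ε) * μ {ω | M ω > x} ≤ μ {ω | S n ω > x - a} := by
    intro a ε hB x
    calc ENNReal.ofReal (1 - ε) * μ {ω | M ω > x}
        = ENNReal.ofReal (1 - ε) * ∑ k ∈ Finset.Icc 1 n, μ (A k x) := by
          rw [hcover x, measure_biUnion_finset (hAdisj x) (fun k _ => hAmeas k x)]
      _ = ∑ k ∈ Finset.Icc 1 n, ENNReal.ofReal (1 - ε) * μ (A k x) := Finset.mul_sum _ _ _
      _ ≤ ∑ k ∈ Finset.Icc 1 n, μ (A k x ∩ B k a) := by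
          refine Finset.sum_le_sum fun k hk => ?_
          rw [hAB k x a, mul_comm]
          exact mul_le_mul_right (hB k hk) _
      _ = μ (⋃ k ∈ Finset.Icc 1 n, (A k x ∩ B k a)) := by
          rw [measure_biUnion_finset (hABdisj x a)
            (fun k _ => (hAmeas k x).inter (hBmeas k a))]
      _ ≤ μ {ω | S n ω > x - a} := by
          refine measure_mono ?_
          intro ω hω
          simp only [Set.mem_iUnion, exists_prop] at hω
          obtain ⟨k, _, hωA, hωB⟩ := hω
          simp only [A, B, Set.mem_setOf_eq] at hωA hωB
          simp only [Set.mem_setOf_eq]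
          have := hST k ω
          linarith [hωA.1, hωB]
  -- denominator facts
  have hDpos : ∀ x : ℝ, 0 < (μ {ω | S n ω > x}).toReal := fun x =>
    ENNReal.toReal_pos (hlongS.1 x).ne' (measure_ne_top μ _)
  have hsub : ∀ x : ℝ, {ω | S n ω > x} ⊆ {ω | M ω > x} := by
    intro x ω hω
    simp only [Set.mem_setOf_eq] at *
    refine lt_of_lt_of_le hω ?_
    exact Finset.le_sup' (fun k => S k ω) (Finset.mem_Icc.mpr ⟨hn, le_refl n⟩)
  -- rewrite the goal
  have hgoal : ∀ x : ℝ, {ω | (∑ i, X i ω) > x} = {ω | S n ω > x} := by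
    intro x; ext ω; simp only [Set.mem_setOf_eq, hfil]
  show Tendsto (fun x : ℝ =>
      (μ {ω | M ω > x}).toReal / (μ {ω | (∑ i, X i ω) > x}).toReal) atTop (nhds 1)
  simp only [hgoal]
  -- final limit argument
  rw [Metric.tendsto_nhds]
  intro δ hδ
  have hε : ∃ ε : ℝ, 0 < ε ∧ ε < 1 ∧ (1 + δ / 4) < (1 + δ) * (1 - ε) := by
    refine ⟨δ / (2 + 2 * δ), by positivity, ?_, ?_⟩
    · rw [div_lt_one (by linarith)]; linarith
    · have h2 : (0:ℝ) < 2 + 2 * δ := by linarith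
      rw [show (1:ℝ) - δ / (2 + 2 * δ) = (2 + δ) / (2 + 2 * δ) by field_simp; ring]
      rw [show (1 + δ) * ((2 + δ) / (2 + 2 * δ)) = ((1 + δ) * (2 + δ)) / (2 + 2 * δ) by ring]
      rw [lt_div_iff₀ h2]
      nlinarith
  obtain ⟨ε, hε0, hε1, hεδ⟩ := hε
  obtain ⟨a, ha0, haB⟩ := hchoice ε hε0
  have hkey := hkeyineq a ε haB
  -- eventual bound from long-tailedness of S n
  have hratio : Tendsto (fun x : ℝ => (μ {ω | S n ω > x - a}).toReal
      / (μ {ω | S n ω > x}).toReal) atTop (nhds 1) := by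
    have := hlongS.2 (-a)
    simpa [sub_eq_add_neg] using this
  filter_upwards [hratio.eventually (eventually_lt_nhds (show (1:ℝ) < 1 + δ/4 by linarith))]
    with x hx
  set D := (μ {ω | S n ω > x}).toReal with hD
  set Da := (μ {ω | S n ω > x - a}).toReal with hDa
  set N := (μ {ω | M ω > x}).toReal with hN
  have hDpos' : 0 < D := hDpos x
  have hDapos : 0 < (μ {ω | S n ω > x - a}).toReal := hDpos (x - a)
  have hND : D ≤ N := ENNReal.toReal_mono (measure_ne_top μ _) (measure_mono (hsub x))
  have hup : (1 - ε) * N ≤ Da := by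
    have h' := ENNReal.toReal_mono (measure_ne_top μ _) (hkey x)
    rwa [ENNReal.toReal_mul, ENNReal.toReal_ofReal (by linarith)] at h'
  have hDax : Da < (1 + δ / 4) * D := by
    have := (div_lt_iff₀ hDpos').mp hx
    linarith
  have hfinal : N < (1 + δ) * D := by
    nlinarith
  rw [Real.dist_eq, abs_lt]
  constructor
  · have : 1 ≤ N / D := (one_le_div hDpos').mpr hND
    linarith
  · have : N / D < 1 + δ := (div_lt_iff₀ hDpos').mpr (by linarith)
    linarith
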